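/- arXiv:1512.03779 — 2 statements merged into one kernel-verified Lean document; each statement's English description precedes it below -/
import Mathlib

section
/- Every maximal chain in the semilattice of idempotents E(I^cf_λ) is an ω-chain, i.e., it is order-isomorphic to the set {0, −1, −2, −3, ...} of non-positive integers with the usual order. -/
open Function Set

namespace IcfPaper

variable {ι : Type*}

lemma trans_none_finite {f g : ι ≃. ι}
    (hf : {a | f a = none}.Finite) (hg : {b | g b = none}.Finite) :
    {a | (f.trans g) a = none}.Finite := by
  have hsub : {a | (f.trans g) a = none} ⊆
      {a | f a = none} ∪ ⋃ b ∈ {b | g b = none}, {a | f.symm b = some a} := by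
    intro a ha
    simp only [Set.mem_setOf_eq] at ha
    rcases hfa : f a with _ | b
    · exact Or.inl hfa
    · have hg' : g b = none := by
        have : (f.trans g) a = (f a).bind g := rfl
        rw [this, hfa] at ha
        exact ha
      refine Or.inr ?_
      refine Set.mem_biUnion hg' ?_
      exact (PEquiv.eq_some_iff f).2 hfa
  refine Set.Finite.subset (hf.union (hg.biUnion ?_)) hsub
  intro b _
  apply Set.Subsingleton.finite
  intro a1 h1 a2 h2
  simp only [Set.mem_setOf_eq] at h1 h2
  rw [h1] at h2
  exact Option.some_injective _ h2

/-- The monoid of injective partial selfmaps of `ι` with cofinite domain and range. -/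
def Icf (ι : Type*) : Type _ :=
  {f : ι ≃. ι // {a | f a = none}.Finite ∧ {b | f.symm b = none}.Finite}

namespace Icf

instance : Monoid (Icf ι) where
  mul f g := ⟨f.1.trans g.1, trans_none_finite f.2.1 g.2.1, by
      rw [PEquiv.symm_trans_rev]
      exact trans_none_finite g.2.2 f.2.2⟩
  one := ⟨PEquiv.refl ι, by
      constructor <;>
      · convert Set.finite_empty
        ext a
        simp only [Set.mem_setOf_eq, Set.mem_empty_iff_false, iff_false]
        intro h
        simp at h⟩
  mul_assoc a b c := Subtype.ext (PEquiv.trans_assoc _ _ _)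
  one_mul a := Subtype.ext (PEquiv.refl_trans _)
  mul_one a := Subtype.ext (PEquiv.trans_refl _)

/-- The domain of an element of `Icf ι`. -/
def dom (f : Icf ι) : Set ι := {a | (f.1 a).isSome}

/-- The range of an element of `Icf ι`. -/
def ran (f : Icf ι) : Set ι := {b | (f.1.symm b).isSome}

/-- `d̄ f`, the number of points of `ι` outside of the domain of `f`. -/
noncomputable def dbar (f : Icf ι) : ℕ := (dom f)ᶜ.ncard

/-- `r̄ f`, the number of points of `ι` outside of the range of `f`. -/
noncomputable def rbar (f : Icf ι) : ℕ := (ran f)ᶜ.ncard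

end Icf

/-- The bicyclic semigroup `⟨p, q | pq = 1⟩`, realized as `ℕ × ℕ` with the operation
`(a,b)(c,d) = (a - b + max(b,c), d - c + max(b,c))`. -/
def Bicyclic : Type := ℕ × ℕ

instance : Mul Bicyclic :=
  ⟨fun x y => (x.1 - x.2 + max x.2 y.1, y.2 - y.1 + max x.2 y.1)⟩


namespace Icf

lemma mul_apply (f g : Icf ι) (a : ι) : (f * g).1 a = (f.1 a).bind g.1 := rfl

lemma ext' {f g : Icf ι} (h : ∀ a, f.1 a = g.1 a) : f = g :=
  Subtype.ext (PEquiv.ext h)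

lemma idem_apply {e : Icf ι} (he : e * e = e) {a b : ι} (hab : e.1 a = some b) : b = a := by
  have h1 : (e * e).1 a = e.1 a := by rw [he]
  rw [mul_apply, hab, Option.bind_some] at h1
  have ha' : e.1.symm b = some a := (PEquiv.eq_some_iff e.1).2 hab
  have hb' : e.1.symm b = some b := (PEquiv.eq_some_iff e.1).2 h1
  exact Option.some_injective _ (hb'.symm.trans ha')

lemma idem_eq_some {e : Icf ι} (he : e * e = e) {a : ι} (ha : a ∈ dom e) :
    e.1 a = some a := by
  obtain ⟨b, hb⟩ := Option.isSome_iff_exists.1 ha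
  rwa [idem_apply he hb] at hb

lemma not_dom_eq_none {e : Icf ι} {a : ι} (ha : a ∉ dom e) : e.1 a = none :=
  Option.not_isSome_iff_eq_none.1 ha

lemma rel_iff {e f : Icf ι} (he : e * e = e) (hf : f * f = f) :
    (e * f = e ∧ f * e = e) ↔ dom e ⊆ dom f := by
  constructor
  · rintro ⟨h1, -⟩ a ha
    have hea : e.1 a = some a := idem_eq_some he ha
    have h2 : (e * f).1 a = e.1 a := by rw [h1]
    rw [mul_apply, hea, Option.bind_some] at h2
    show (f.1 a).isSome
    rw [h2]; rfl
  · intro hsub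
    constructor
    · apply ext'
      intro a
      rw [mul_apply]
      rcases h : e.1 a with _ | b
      · rfl
      · have hb := idem_apply he h
        subst hb
        have ha : b ∈ dom e := by show (e.1 b).isSome; rw [h]; rfl
        rw [Option.bind_some, idem_eq_some hf (hsub ha)]
    · apply ext'
      intro a
      rw [mul_apply]
      rcases h : f.1 a with _ | b
      · have hnd : a ∉ dom e := by
          intro ha
          have := idem_eq_some hf (hsub ha)
          rw [h] at this; simp at this
        rw [Option.bind_none, not_dom_eq_none hnd]
      · have hb := idem_apply hf h
        subst hb
        rw [Option.bind_some]

lemma eq_of_dom_eq {e f : Icf ι} (he : e * e = e) (hf : f * f = f)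
    (h : dom e = dom f) : e = f := by
  apply ext'
  intro a
  by_cases ha : a ∈ dom e
  · rw [idem_eq_some he ha, idem_eq_some hf (h ▸ ha)]
  · rw [not_dom_eq_none ha, not_dom_eq_none (fun hc => ha (h ▸ hc))]

open scoped Classical

/-- The restriction of the identity to `A`, as a `PEquiv`. -/
noncomputable def idemOfAux (A : Set ι) : ι ≃. ι where
  toFun a := if a ∈ A then some a else none
  invFun a := if a ∈ A then some a else none
  inv a b := by
    split_ifs with h1 h2 h2 <;> simp [eq_comm] <;>
      rintro rfl <;> first | exact absurd h1 h2 | exact absurd h2 h1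

lemma idemOfAux_apply (A : Set ι) (a : ι) :
    idemOfAux A a = if a ∈ A then some a else none := rfl

lemma idemOfAux_symm_apply (A : Set ι) (a : ι) :
    (idemOfAux A).symm a = if a ∈ A then some a else none := rfl

lemma idemOfAux_none_set (A : Set ι) : {a | idemOfAux A a = none} = Aᶜ := by
  ext a
  by_cases h : a ∈ A <;> simp [idemOfAux_apply, h]

lemma idemOfAux_symm_none_set (A : Set ι) : {a | (idemOfAux A).symm a = none} = Aᶜ := by
  ext a
  by_cases h : a ∈ A <;> simp [idemOfAux_symm_apply, h]

/-- The idempotent with domain `A`. -/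
noncomputable def idemOf (A : Set ι) (hA : Aᶜ.Finite) : Icf ι :=
  ⟨idemOfAux A, by rw [idemOfAux_none_set]; exact hA,
    by rw [idemOfAux_symm_none_set]; exact hA⟩

lemma idemOf_apply (A : Set ι) (hA : Aᶜ.Finite) (a : ι) :
    (idemOf A hA).1 a = if a ∈ A then some a else none := rfl

lemma dom_idemOf (A : Set ι) (hA : Aᶜ.Finite) : dom (idemOf A hA) = A := by
  ext a
  simp only [dom, Set.mem_setOf_eq]
  rw [idemOf_apply]
  by_cases h : a ∈ A <;> simp [h]

lemma idemOf_idem (A : Set ι) (hA : Aᶜ.Finite) :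
    idemOf A hA * idemOf A hA = idemOf A hA := by
  apply ext'
  intro a
  rw [mul_apply]
  by_cases h : a ∈ A <;> simp [idemOf_apply, h]

lemma compl_dom_eq {e : Icf ι} : (dom e)ᶜ = {a | e.1 a = none} := by
  ext a
  simp only [Set.mem_compl_iff, Set.mem_setOf_eq]
  exact ⟨Option.not_isSome_iff_eq_none.1, fun h => by simp [dom, h]⟩

lemma compl_dom_finite (e : Icf ι) : ((dom e)ᶜ).Finite := by
  rw [compl_dom_eq]; exact e.2.1

end Icf

open Icf

/-- Every maximal chain of idempotents of `Icf ι` is an `ω`-chain, i.e. order-isomorphic to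
the non-positive integers with the usual order. -/
theorem statement2 {ι : Type*} [Infinite ι] (C : Set (Icf ι))
    (hCE : ∀ e ∈ C, e * e = e)
    (hchain : IsChain (fun e f : Icf ι => e * f = e ∧ f * e = e) C)
    (hmax : ∀ D : Set (Icf ι), (∀ e ∈ D, e * e = e) →
      IsChain (fun e f : Icf ι => e * f = e ∧ f * e = e) D → C ⊆ D → D = C) :
    ∃ φ : C → {n : ℤ // n ≤ 0}, Function.Bijective φ ∧
      ∀ x y : C, ((x : Icf ι) * (y : Icf ι) = (x : Icf ι) ∧
        (y : Icf ι) * (x : Icf ι) = (x : Icf ι)) ↔ φ x ≤ φ y := by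
  classical
  -- comparability of complements of domains
  have hcomp : ∀ e ∈ C, ∀ f ∈ C, (dom e)ᶜ ⊆ (dom f)ᶜ ∨ (dom f)ᶜ ⊆ (dom e)ᶜ := by
    intro e he f hf
    rcases eq_or_ne e f with rfl | hne
    · exact Or.inl le_rfl
    rcases hchain he hf hne with h | h
    · exact Or.inr (Set.compl_subset_compl.2 ((rel_iff (hCE e he) (hCE f hf)).1 h))
    · exact Or.inl (Set.compl_subset_compl.2 ((rel_iff (hCE f hf) (hCE e he)).1 h))
  -- monotonicity: smaller complement card means smaller complement
  have hmono : ∀ e ∈ C, ∀ f ∈ C, ((dom e)ᶜ).ncard ≤ ((dom f)ᶜ).ncard →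
      (dom e)ᶜ ⊆ (dom f)ᶜ := by
    intro e he f hf hle
    rcases hcomp e he f hf with h | h
    · exact h
    · have := Set.eq_of_subset_of_ncard_le h hle (compl_dom_finite e)
      rw [this]
  -- injectivity of the cardinality map
  have hinj : ∀ e ∈ C, ∀ f ∈ C, ((dom e)ᶜ).ncard = ((dom f)ᶜ).ncard → e = f := by
    intro e he f hf hcard
    have h1 := hmono e he f hf hcard.le
    have h2 := hmono f hf e he hcard.ge
    have hc : (dom e)ᶜ = (dom f)ᶜ := Set.Subset.antisymm h1 h2
    have hd : dom e = dom f := by rw [← compl_compl (dom e), hc, compl_compl]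
    exact eq_of_dom_eq (hCE e he) (hCE f hf) hd
  -- extension lemma: any finite set comparable with all complements occurs
  have hext : ∀ G : Set ι, G.Finite → (∀ c ∈ C, (dom c)ᶜ ⊆ G ∨ G ⊆ (dom c)ᶜ) →
      ∃ e ∈ C, (dom e)ᶜ = G := by
    intro G hG hGcomp
    have hGc : (Gᶜ)ᶜ.Finite := by rwa [compl_compl]
    set g : Icf ι := idemOf Gᶜ hGc with hgdef
    have hgg : g * g = g := idemOf_idem _ _
    have hdomg : (dom g)ᶜ = G := by rw [hgdef, dom_idemOf, compl_compl]
    have hD : C ∪ {g} = C := by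
      apply hmax
      · intro e hee
        rcases hee with hee | hee
        · exact hCE e hee
        · rw [Set.mem_singleton_iff] at hee; rw [hee]; exact hgg
      · intro x hx y hy hxy
        have key : ∀ c ∈ C, (c * g = c ∧ g * c = c) ∨ (g * c = g ∧ c * g = g) := by
          intro c hc
          rcases hGcomp c hc with h | h
          · refine Or.inr ((rel_iff hgg (hCE c hc)).2 ?_)
            rw [← hdomg] at h
            exact Set.compl_subset_compl.1 h
          · refine Or.inl ((rel_iff (hCE c hc) hgg).2 ?_)
            rw [← hdomg] at h
            exact Set.compl_subset_compl.1 h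
        rcases hx with hx | hx <;> rcases hy with hy | hy
        · exact hchain hx hy hxy
        · rw [Set.mem_singleton_iff] at hy; subst hy; exact key x hx
        · rw [Set.mem_singleton_iff] at hx; subst hx
          rcases key y hy with h | h
          · exact Or.inr h
          · exact Or.inl h
        · rw [Set.mem_singleton_iff] at hx hy; subst hx; subst hy
          exact absurd rfl hxy
      · exact Set.subset_union_left
    have hgC : g ∈ C := by
      rw [← hD]; exact Or.inr rfl
    exact ⟨g, hgC, hdomg⟩
  -- surjectivity of the cardinality map onto ℕ
  have hsurj : ∀ n : ℕ, ∃ e ∈ C, ((dom e)ᶜ).ncard = n := by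
    intro n
    induction n with
    | zero =>
      obtain ⟨e, he, hdome⟩ := hext ∅ Set.finite_empty
        (fun c _ => Or.inr (Set.empty_subset _))
      exact ⟨e, he, by rw [hdome, Set.ncard_empty]⟩
    | succ n ih =>
      obtain ⟨e, heC, hen⟩ := ih
      by_cases hbig : ∃ c ∈ C, n < ((dom c)ᶜ).ncard
      · -- take the minimal value above n
        have hP : ∃ m : ℕ, n < m ∧ ∃ c ∈ C, ((dom c)ᶜ).ncard = m := by
          obtain ⟨c, hc, hcn⟩ := hbig
          exact ⟨((dom c)ᶜ).ncard, hcn, c, hc, rfl⟩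
        set b := Nat.find hP with hbdef
        obtain ⟨hnb, f, hfC, hfb⟩ := Nat.find_spec hP
        rcases eq_or_lt_of_le (Nat.succ_le_of_lt hnb) with hb1 | hb1
        · exact ⟨f, hfC, hfb ▸ hb1.symm⟩
        · -- n + 1 < b : interpolate
          have hef : (dom e)ᶜ ⊆ (dom f)ᶜ := hmono e heC f hfC (by omega)
          have hne : (dom e)ᶜ ≠ (dom f)ᶜ := fun hcon => by
            rw [hcon, hfb] at hen; omega
          obtain ⟨x, hxf, hxe⟩ : ∃ x, x ∈ (dom f)ᶜ ∧ x ∉ (dom e)ᶜ := by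
            by_contra hcon
            push_neg at hcon
            exact hne (Set.Subset.antisymm hef hcon)
          set G := insert x ((dom e)ᶜ) with hGdef
          have hGfin : G.Finite := (compl_dom_finite e).insert x
          have hGcard : G.ncard = n + 1 := by
            rw [hGdef, Set.ncard_insert_of_notMem hxe (compl_dom_finite e), hen]
          have hGsubf : G ⊆ (dom f)ᶜ := by
            rw [hGdef]; exact Set.insert_subset hxf hef
          have hcompat : ∀ c ∈ C, (dom c)ᶜ ⊆ G ∨ G ⊆ (dom c)ᶜ := by
            intro c hc
            by_cases hcn : ((dom c)ᶜ).ncard ≤ n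
            · refine Or.inl (Set.Subset.trans (hmono c hc e heC (by omega)) ?_)
              rw [hGdef]; exact Set.subset_insert _ _
            · push_neg at hcn
              have hbc : b ≤ ((dom c)ᶜ).ncard :=
                Nat.find_le ⟨hcn, c, hc, rfl⟩
              exact Or.inr (Set.Subset.trans hGsubf
                (hmono f hfC c hc (by omega)))
          obtain ⟨e', he'C, he'G⟩ := hext G hGfin hcompat
          exact ⟨e', he'C, by rw [he'G, hGcard]⟩
      · -- all values are at most n; extend by one point
        push_neg at hbig
        obtain ⟨x, hxe⟩ : ∃ x, x ∉ (dom e)ᶜ := by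
          have := (compl_dom_finite e).infinite_compl
          obtain ⟨x, hx⟩ := this.nonempty
          exact ⟨x, hx⟩
        set G := insert x ((dom e)ᶜ) with hGdef
        have hGfin : G.Finite := (compl_dom_finite e).insert x
        have hGcard : G.ncard = n + 1 := by
          rw [hGdef, Set.ncard_insert_of_notMem hxe (compl_dom_finite e), hen]
        have hcompat : ∀ c ∈ C, (dom c)ᶜ ⊆ G ∨ G ⊆ (dom c)ᶜ := by
          intro c hc
          refine Or.inl (Set.Subset.trans (hmono c hc e heC ?_) ?_)
          · have := hbig c hc; omega
          · rw [hGdef]; exact Set.subset_insert _ _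
        obtain ⟨e', he'C, he'G⟩ := hext G hGfin hcompat
        exact ⟨e', he'C, by rw [he'G, hGcard]⟩
  -- the map
  refine ⟨fun x => ⟨-(((dom (x : Icf ι))ᶜ).ncard : ℤ), by omega⟩, ⟨?_, ?_⟩, ?_⟩
  · -- injective
    intro x y hxy
    have h1 : (((dom (x : Icf ι))ᶜ).ncard : ℤ) = (((dom (y : Icf ι))ᶜ).ncard : ℤ) := by
      have := congrArg Subtype.val hxy
      simpa using this
    have h2 : ((dom (x : Icf ι))ᶜ).ncard = ((dom (y : Icf ι))ᶜ).ncard := by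
      exact_mod_cast h1
    exact Subtype.ext (hinj _ x.2 _ y.2 h2)
  · -- surjective
    rintro ⟨m, hm⟩
    obtain ⟨e, heC, hen⟩ := hsurj (-m).toNat
    refine ⟨⟨e, heC⟩, ?_⟩
    apply Subtype.ext
    show -((((dom e)ᶜ).ncard : ℕ) : ℤ) = m
    rw [hen, Int.toNat_of_nonneg (by omega)]
    omega
  · -- order-preserving
    intro x y
    rw [rel_iff (hCE _ x.2) (hCE _ y.2), ← Set.compl_subset_compl]
    constructor
    · intro h
      have : ((dom (y : Icf ι))ᶜ).ncard ≤ ((dom (x : Icf ι))ᶜ).ncard :=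
        Set.ncard_le_ncard h (compl_dom_finite _)
      exact Subtype.mk_le_mk.2 (by omega)
    · intro h
      have h' := Subtype.mk_le_mk.1 h
      exact hmono _ y.2 _ x.2 (by omega)

end IcfPaper
end

section
/- For all α, β in I^cf_λ, both sets {χ ∈ I^cf_λ : α·χ = β} and {χ ∈ I^cf_λ : χ·α = β} are finite. Consequently, every left translation and every right translation by an element of I^cf_λ is a finite-to-one map. -/
open Function Set

namespace IcfPaper

variable {ι : Type*}

lemma Icf.mul_val {ι : Type*} (f g : Icf ι) : (f * g).1 = f.1.trans g.1 := rfl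

lemma Icf.left_finite {ι : Type*} (α β : Icf ι) : {χ : Icf ι | α * χ = β}.Finite := by
  classical
  set F : Set ι := {b | α.1.symm b = none} with hFdef
  have hF : F.Finite := α.2.2
  have hG : {c | β.1.symm c = none}.Finite := β.2.2
  haveI := hF.to_subtype
  set Ψ : Icf ι → (F → Option ι) := fun χ b => χ.1 b.1 with hΨ
  have hT : (insert (none : Option ι) (some '' {c | β.1.symm c = none})).Finite :=
    (hG.image _).insert _
  have himg : Ψ '' {χ : Icf ι | α * χ = β} ⊆ Set.pi Set.univ
      (fun _ : F => insert none (some '' {c | β.1.symm c = none})) := by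
    rintro h ⟨χ, hχ, rfl⟩ b -
    show χ.1 b.1 ∈ insert none (some '' {c | β.1.symm c = none})
    rcases hc : χ.1 b.1 with _ | c
    · exact Set.mem_insert _ _
    · refine Set.mem_insert_of_mem _ ⟨c, ?_, rfl⟩
      by_contra hcon
      obtain ⟨a, ha⟩ := Option.ne_none_iff_exists'.1 hcon
      have hβ : β.1 a = some c := (PEquiv.eq_some_iff β.1).1 ha
      have hβ' : α.1.trans χ.1 = β.1 := by
        rw [← Icf.mul_val, hχ]
      have : (α.1 a).bind χ.1 = some c := by
        rw [show (α.1 a).bind χ.1 = (α.1.trans χ.1) a from rfl, hβ', hβ]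
      obtain ⟨b', hb1, hb2⟩ := Option.bind_eq_some_iff.1 this
      have e1 : χ.1.symm c = some b' := (PEquiv.eq_some_iff χ.1).2 hb2
      have e2 : χ.1.symm c = some b.1 := (PEquiv.eq_some_iff χ.1).2 hc
      have : b' = b.1 := Option.some_injective _ (e1.symm.trans e2)
      rw [this] at hb1
      have : α.1.symm b.1 = some a := (PEquiv.eq_some_iff α.1).2 hb1
      have hb0 : α.1.symm b.1 = none := b.2
      rw [hb0] at this
      exact Option.some_ne_none _ this.symm
  have hinj : Set.InjOn Ψ {χ : Icf ι | α * χ = β} := by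
    intro χ1 h1 χ2 h2 heq
    apply Subtype.ext
    apply PEquiv.ext
    intro b
    by_cases hb : α.1.symm b = none
    · exact congrFun heq ⟨b, hb⟩
    · obtain ⟨a, ha⟩ := Option.ne_none_iff_exists'.1 hb
      have hab : α.1 a = some b := (PEquiv.eq_some_iff α.1).1 ha
      have e1 : χ1.1 b = β.1 a := by
        have hβ' : α.1.trans χ1.1 = β.1 := by rw [← Icf.mul_val, h1]
        rw [← hβ', show (α.1.trans χ1.1) a = (α.1 a).bind χ1.1 from rfl, hab,
          Option.bind_some]
      have e2 : χ2.1 b = β.1 a := by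
        have hβ' : α.1.trans χ2.1 = β.1 := by rw [← Icf.mul_val, h2]
        rw [← hβ', show (α.1.trans χ2.1) a = (α.1 a).bind χ2.1 from rfl, hab,
          Option.bind_some]
      rw [e1, e2]
  have hfin : (Ψ '' {χ : Icf ι | α * χ = β}).Finite :=
    (Set.Finite.pi fun _ => hT).subset himg
  exact Set.Finite.of_finite_image hfin hinj

/-- Inversion on `Icf ι`. -/
def Icf.inv {ι : Type*} (χ : Icf ι) : Icf ι :=
  ⟨χ.1.symm, χ.2.2, by rw [PEquiv.symm_symm]; exact χ.2.1⟩

lemma Icf.inv_injective {ι : Type*} : Function.Injective (Icf.inv (ι := ι)) := by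
  intro x y h
  apply Subtype.ext
  have := congrArg Subtype.val h
  simpa [Icf.inv] using congrArg PEquiv.symm this

/-- For all `α β` in `Icf ι`, the solution sets of `α·χ = β` and `χ·α = β` are finite;
consequently translations in `Icf ι` are finite-to-one. -/
theorem statement10 {ι : Type*} [Infinite ι] (α β : Icf ι) :
    {χ : Icf ι | α * χ = β}.Finite ∧ {χ : Icf ι | χ * α = β}.Finite := by
  refine ⟨Icf.left_finite α β, ?_⟩
  have h := Icf.left_finite (Icf.inv α) (Icf.inv β)
  have himg : Icf.inv '' {χ : Icf ι | χ * α = β} ⊆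
      {χ : Icf ι | Icf.inv α * χ = Icf.inv β} := by
    rintro ψ ⟨χ, hχ, rfl⟩
    show Icf.inv α * Icf.inv χ = Icf.inv β
    apply Subtype.ext
    show α.1.symm.trans χ.1.symm = β.1.symm
    rw [← PEquiv.symm_trans_rev, ← Icf.mul_val, hχ]
  exact Set.Finite.of_finite_image (h.subset himg)
    (Icf.inv_injective.injOn)

end IcfPaper
end
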